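/- Let x ∈ Z_q^n have Hamming weight w and exactly m runs of zeros of length ≥ k. For 0 ≤ s ≤ t with t - s ≤ m - s, the number of distinct strings obtainable from x by first inserting s blocks 0^k and then deleting t-s blocks 0^k is at least C(w+s, s) · C(m-s, t-s), and all such strings have length n + k(2s - t). -/

import Mathlib

/-- The Hamming weight of a string over `ℤ_q`. -/
def wt (q : ℕ) (x : List (ZMod q)) : ℕ := x.countP fun a => decide (a ≠ 0)

/-- The list `[r_0(x), …, r_w(x)]` of lengths of the runs of zeros of `x`. -/
def zeroRuns (q : ℕ) : List (ZMod q) → List ℕ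
  | [] => [0]
  | a :: rest =>
    if a = 0 then
      match zeroRuns q rest with
      | r :: rs => (r + 1) :: rs
      | [] => [1]
    else 0 :: zeroRuns q rest

/-- One insertion of a block `0^k` at some position of the string `x`. -/
def Ins (q k : ℕ) (x y : List (ZMod q)) : Prop :=
  ∃ j ≤ x.length, y = x.take j ++ List.replicate k (0 : ZMod q) ++ x.drop j

/-- One deletion of a block of `k` consecutive zeros. -/
def Del (q k : ℕ) (x y : List (ZMod q)) : Prop := Ins q k y x

/-- `u` successive insertions of blocks `0^k`. -/
def InsN (q k : ℕ) : ℕ → List (ZMod q) → List (ZMod q) → Prop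
  | 0, x, y => y = x
  | u + 1, x, y => ∃ z, Ins q k x z ∧ InsN q k u z y

/-- `u` successive deletions of blocks `0^k`. -/
def DelN (q k : ℕ) : ℕ → List (ZMod q) → List (ZMod q) → Prop
  | 0, x, y => y = x
  | u + 1, x, y => ∃ z, Del q k x z ∧ DelN q k u z y

namespace Stmt9

variable {q k : ℕ}

/-- Build a string from run lengths and nonzero letters. -/
def bld (q : ℕ) : List ℕ → List (ZMod q) → List (ZMod q)
  | [], _ => []
  | r :: _, [] => List.replicate r 0
  | r :: rs, c :: cs => List.replicate r 0 ++ c :: bld q rs cs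

lemma bld_cons (v : ℕ) (rs : List ℕ) (cs : List (ZMod q)) :
    bld q (v :: rs) cs = List.replicate v 0 ++ bld q (0 :: rs) cs := by
  cases cs <;> simp [bld]

lemma zeroRuns_ne_nil (l : List (ZMod q)) : zeroRuns q l ≠ [] := by
  induction l with
  | nil => simp [zeroRuns]
  | cons a l ih =>
    by_cases h : a = 0
    · simp only [zeroRuns, if_pos h]
      rcases hz : zeroRuns q l with _ | ⟨r, rs⟩ <;> simp
    · simp [zeroRuns, if_neg h]

lemma zeroRuns_cons_zero {l : List (ZMod q)} {r : ℕ} {rs : List ℕ}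
    (h : zeroRuns q l = r :: rs) : zeroRuns q (0 :: l) = (r + 1) :: rs := by
  simp [zeroRuns, h]

lemma zeroRuns_cons_ne {a : ZMod q} (ha : a ≠ 0) (l : List (ZMod q)) :
    zeroRuns q (a :: l) = 0 :: zeroRuns q l := by
  simp [zeroRuns, ha]

lemma zeroRuns_replicate_append {l : List (ZMod q)} {v : ℕ} {vs : List ℕ}
    (h : zeroRuns q l = v :: vs) (r : ℕ) :
    zeroRuns q (List.replicate r 0 ++ l) = (r + v) :: vs := by
  induction r with
  | zero => simpa using h
  | succ r ih =>
    have : zeroRuns q (0 :: (List.replicate r 0 ++ l)) = (r + v + 1) :: vs :=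
      zeroRuns_cons_zero ih
    simpa [List.replicate_succ, Nat.add_right_comm, Nat.add_assoc, Nat.add_comm] using this

lemma zeroRuns_bld : ∀ (cs : List (ZMod q)) (rs : List ℕ),
    rs.length = cs.length + 1 → (∀ c ∈ cs, c ≠ 0) → zeroRuns q (bld q rs cs) = rs := by
  intro cs
  induction cs with
  | nil =>
    rintro (_ | ⟨r, (_ | ⟨r', rs⟩)⟩) hlen hcs
    · simp at hlen
    · have : zeroRuns q ([] : List (ZMod q)) = 0 :: [] := by simp [zeroRuns]
      have := zeroRuns_replicate_append (q := q) this r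
      simpa [bld] using this
    · simp at hlen
  | cons c cs ih =>
    rintro (_ | ⟨r, rs⟩) hlen hcs
    · simp at hlen
    · have hlen' : rs.length = cs.length + 1 := by simpa using hlen
      have hcs' : ∀ c ∈ cs, c ≠ 0 := fun c hc => hcs c (List.mem_cons_of_mem _ hc)
      have hc0 : c ≠ 0 := hcs c List.mem_cons_self
      have h1 : zeroRuns q (c :: bld q rs cs) = 0 :: rs := by
        rw [zeroRuns_cons_ne hc0, ih rs hlen' hcs']
      have := zeroRuns_replicate_append (q := q) h1 r
      simpa [bld] using this

lemma bld_zeroRuns (x : List (ZMod q)) :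
    bld q (zeroRuns q x) (x.filter fun a => decide (a ≠ 0)) = x := by
  induction x with
  | nil => simp [zeroRuns, bld]
  | cons a x ih =>
    by_cases h : a = 0
    · subst h
      rcases hz : zeroRuns q x with _ | ⟨r, rs⟩
      · exact absurd hz (zeroRuns_ne_nil x)
      · rw [zeroRuns_cons_zero hz]
        have hf : (List.filter (fun a => decide (a ≠ 0)) (0 :: x)) =
            List.filter (fun a => decide (a ≠ 0)) x := by simp
        rw [hf, bld_cons, List.replicate_succ, List.cons_append]
        rw [hz] at ih
        rw [bld_cons] at ih
        rw [ih]
    · rw [zeroRuns_cons_ne h]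
      have hf : (List.filter (fun a => decide (a ≠ 0)) (a :: x)) =
          a :: List.filter (fun a => decide (a ≠ 0)) x := by simp [h]
      rw [hf]
      simp only [bld, List.replicate_zero, List.nil_append]
      rw [ih]

lemma length_zeroRuns (x : List (ZMod q)) : (zeroRuns q x).length = wt q x + 1 := by
  induction x with
  | nil => simp [zeroRuns, wt]
  | cons a x ih =>
    by_cases h : a = 0
    · rcases hz : zeroRuns q x with _ | ⟨r, rs⟩
      · exact absurd hz (zeroRuns_ne_nil x)
      · subst h
        rw [zeroRuns_cons_zero hz]
        rw [hz] at ih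
        simpa [wt, List.countP_cons] using ih
    · rw [zeroRuns_cons_ne h]
      simp only [wt, List.countP_cons] at *
      simp [ih, h]

lemma Ins_cons {x y : List (ZMod q)} (a : ZMod q) (h : Ins q k x y) :
    Ins q k (a :: x) (a :: y) := by
  obtain ⟨j, hj, rfl⟩ := h
  exact ⟨j + 1, by simpa using hj, by simp⟩

lemma Ins_append_left {x y : List (ZMod q)} (l : List (ZMod q)) (h : Ins q k x y) :
    Ins q k (l ++ x) (l ++ y) := by
  induction l with
  | nil => simpa
  | cons a l ih => simpa using Ins_cons a ih

lemma Ins_length {x y : List (ZMod q)} (h : Ins q k x y) : y.length = x.length + k := by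
  obtain ⟨j, hj, rfl⟩ := h
  simp [List.length_take, List.length_drop]
  omega

lemma set_getElem_self (l : List ℕ) (i : ℕ) (h : i < l.length) : l.set i l[i] = l := by
  apply List.ext_getElem (by simp)
  intro j hj hj'
  rw [List.getElem_set]
  split <;> simp_all

lemma ins_bld : ∀ (i : ℕ) (rs : List ℕ) (cs : List (ZMod q)),
    rs.length = cs.length + 1 → ∀ (h : i < rs.length),
    Ins q k (bld q rs cs) (bld q (rs.set i (rs[i] + k)) cs) := by
  intro i
  induction i with
  | zero =>
    rintro (_ | ⟨r, rs⟩) cs hlen h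
    · simp at h
    · refine ⟨0, Nat.zero_le _, ?_⟩
      simp only [List.getElem_cons_zero, List.set_cons_zero, List.take_zero, List.drop_zero,
        List.nil_append]
      rw [bld_cons, bld_cons (q := q) r, Nat.add_comm, List.replicate_add, List.append_assoc]
  | succ i ih =>
    rintro (_ | ⟨r, rs⟩) (_ | ⟨c, cs⟩) hlen h
    · simp at h
    · simp at h
    · simp only [List.length_cons, List.length_nil] at hlen h; omega
    · have hlen' : rs.length = cs.length + 1 := by simpa using hlen
      have h' : i < rs.length := by simpa using h
      have := Ins_append_left (k := k) (List.replicate r 0) (Ins_cons c (ih rs cs hlen' h'))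
      simpa [bld] using this

lemma del_bld (i : ℕ) (rs : List ℕ) (cs : List (ZMod q))
    (hlen : rs.length = cs.length + 1) (h : i < rs.length) (hki : k ≤ rs[i]) :
    Del q k (bld q rs cs) (bld q (rs.set i (rs[i] - k)) cs) := by
  have h2 : i < (rs.set i (rs[i] - k)).length := by simpa using h
  have := ins_bld (k := k) i (rs.set i (rs[i] - k)) cs (by simpa using hlen) h2
  rw [List.getElem_set_self, Nat.sub_add_cancel hki, List.set_set,
    set_getElem_self rs i h] at this
  exact this

lemma InsN_length : ∀ (u : ℕ) {x z : List (ZMod q)}, InsN q k u x z →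
    z.length = x.length + k * u := by
  intro u
  induction u with
  | zero => rintro x z rfl; simp
  | succ u ih =>
    rintro x z ⟨y, hxy, hyz⟩
    have h1 := ih hyz
    have h2 := Ins_length hxy
    rw [Nat.mul_succ]
    omega

lemma DelN_length : ∀ (u : ℕ) {x z : List (ZMod q)}, DelN q k u x z →
    x.length = z.length + k * u := by
  intro u
  induction u with
  | zero => rintro x z rfl; simp
  | succ u ih =>
    rintro x z ⟨y, hxy, hyz⟩
    have h1 := ih hyz
    have h2 := Ins_length hxy
    rw [Nat.mul_succ]
    omega

lemma InsN_snoc : ∀ (u : ℕ) {x z y : List (ZMod q)}, InsN q k u x z → Ins q k z y →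
    InsN q k (u + 1) x y := by
  intro u
  induction u with
  | zero => rintro x z y rfl h; exact ⟨y, h, rfl⟩
  | succ u ih =>
    rintro x z y ⟨w, hxw, hwz⟩ h
    exact ⟨w, hxw, ih hwz h⟩

lemma DelN_snoc : ∀ (u : ℕ) {x z y : List (ZMod q)}, DelN q k u x z → Del q k z y →
    DelN q k (u + 1) x y := by
  intro u
  induction u with
  | zero => rintro x z y rfl h; exact ⟨y, h, rfl⟩
  | succ u ih =>
    rintro x z y ⟨w, hxw, hwz⟩ h
    exact ⟨w, hxw, ih hwz h⟩

def vec (k : ℕ) (ρ : List ℕ) (σ : Multiset (Fin ρ.length)) (D : Finset (Fin ρ.length)) :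
    List ℕ :=
  List.ofFn fun i => if i ∈ D then ρ.get i - k else ρ.get i + k * σ.count i

@[simp] lemma vec_length (ρ : List ℕ) (σ : Multiset (Fin ρ.length))
    (D : Finset (Fin ρ.length)) : (vec k ρ σ D).length = ρ.length := by simp [vec]

lemma vec_getElem (ρ : List ℕ) (σ : Multiset (Fin ρ.length)) (D : Finset (Fin ρ.length))
    (i : ℕ) (h : i < ρ.length) :
    (vec k ρ σ D)[i]'(by simpa using h) =
      if (⟨i, h⟩ : Fin ρ.length) ∈ D then ρ.get ⟨i, h⟩ - k
      else ρ.get ⟨i, h⟩ + k * σ.count ⟨i, h⟩ := by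
  simp [vec]

lemma insN_vec (ρ : List ℕ) (cs : List (ZMod q)) (hlen : ρ.length = cs.length + 1)
    (σ : Multiset (Fin ρ.length)) :
    InsN q k (Multiset.card σ) (bld q ρ cs) (bld q (vec k ρ σ ∅) cs) := by
  induction σ using Multiset.induction_on with
  | empty =>
    show bld q (vec k ρ 0 ∅) cs = bld q ρ cs
    congr 1
    simp only [vec, Finset.notMem_empty, if_false, Multiset.count_zero, Nat.mul_zero,
      Nat.add_zero]
    exact List.ofFn_get ρ
  | cons j σ ih =>
    rw [Multiset.card_cons]
    have hj : (j : ℕ) < (vec k ρ σ ∅).length := by simp [j.isLt]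
    refine InsN_snoc _ ih ?_
    have hset : vec k ρ (j ::ₘ σ) ∅ =
        (vec k ρ σ ∅).set (j : ℕ) ((vec k ρ σ ∅)[(j : ℕ)]'hj + k) := by
      apply List.ext_getElem (by simp)
      intro i h1 h2
      rw [List.getElem_set]
      have hi : i < ρ.length := by simpa using h1
      have hvalj : (vec k ρ σ ∅)[(j : ℕ)]'hj = ρ.get j + k * σ.count j := by
        rw [vec_getElem (k := k) ρ σ ∅ (j : ℕ) j.isLt]
        simp
      rw [vec_getElem (k := k) ρ (j ::ₘ σ) ∅ i hi]
      simp only [Finset.notMem_empty, if_false]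
      by_cases hij : (j : ℕ) = i
      · rw [if_pos hij, hvalj]
        have hfin : (⟨i, hi⟩ : Fin ρ.length) = j := Fin.ext hij.symm
        rw [hfin, Multiset.count_cons_self]
        ring
      · rw [if_neg hij]
        have hfin : (⟨i, hi⟩ : Fin ρ.length) ≠ j := fun he => hij (congrArg Fin.val he).symm
        rw [Multiset.count_cons_of_ne hfin, vec_getElem (k := k) ρ σ ∅ i hi]
        simp
    rw [hset]
    exact ins_bld (j : ℕ) (vec k ρ σ ∅) cs (by simpa using hlen) hj

lemma delN_vec (ρ : List ℕ) (cs : List (ZMod q)) (hlen : ρ.length = cs.length + 1)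
    (hk : 1 ≤ k) (σ : Multiset (Fin ρ.length)) (D : Finset (Fin ρ.length))
    (hD : ∀ i ∈ D, k ≤ ρ.get i ∧ σ.count i = 0) :
    DelN q k D.card (bld q (vec k ρ σ ∅) cs) (bld q (vec k ρ σ D) cs) := by
  induction D using Finset.induction_on with
  | empty => rfl
  | @insert j D hjD ih =>
    rw [Finset.card_insert_of_notMem hjD]
    have hD' : ∀ i ∈ D, k ≤ ρ.get i ∧ σ.count i = 0 := fun i hi =>
      hD i (Finset.mem_insert_of_mem hi)
    have hj := hD j (Finset.mem_insert_self j D)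
    have hjl : (j : ℕ) < (vec k ρ σ D).length := by simp [j.isLt]
    have hval : (vec k ρ σ D)[(j : ℕ)]'hjl = ρ.get j := by
      rw [vec_getElem (k := k) ρ σ D (j : ℕ) j.isLt]
      simp [Fin.eta, hjD, hj.2]
    refine DelN_snoc _ (ih hD') ?_
    have hset : vec k ρ σ (insert j D) =
        (vec k ρ σ D).set (j : ℕ) ((vec k ρ σ D)[(j : ℕ)]'hjl - k) := by
      apply List.ext_getElem (by simp)
      intro i h1 h2
      rw [List.getElem_set]
      have hi : i < ρ.length := by simpa using h1
      rw [vec_getElem (k := k) ρ σ (insert j D) i hi]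
      by_cases hij : (j : ℕ) = i
      · rw [if_pos hij, hval]
        have hfin : (⟨i, hi⟩ : Fin ρ.length) = j := Fin.ext hij.symm
        rw [hfin, if_pos (Finset.mem_insert_self j D)]
      · rw [if_neg hij]
        have hfin : (⟨i, hi⟩ : Fin ρ.length) ≠ j := fun he => hij (congrArg Fin.val he).symm
        rw [vec_getElem (k := k) ρ σ D i hi]
        simp [Finset.mem_insert, hfin]
    rw [hset]
    have := del_bld (k := k) (j : ℕ) (vec k ρ σ D) cs (by simpa using hlen) hjl
      (by rw [hval]; exact hj.1)
    exact this

lemma vec_inj (hk : 1 ≤ k) (ρ : List ℕ)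
    (σ σ' : Multiset (Fin ρ.length)) (D D' : Finset (Fin ρ.length))
    (hD : ∀ i ∈ D, k ≤ ρ.get i ∧ σ.count i = 0)
    (hD' : ∀ i ∈ D', k ≤ ρ.get i ∧ σ'.count i = 0)
    (heq : vec k ρ σ D = vec k ρ σ' D') : σ = σ' ∧ D = D' := by
  rw [vec, vec, List.ofFn_inj] at heq
  have hpt : ∀ i : Fin ρ.length,
      (if i ∈ D then ρ.get i - k else ρ.get i + k * σ.count i) =
      (if i ∈ D' then ρ.get i - k else ρ.get i + k * σ'.count i) := fun i =>
    congrFun heq i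
  have key : ∀ i : Fin ρ.length, (i ∈ D ↔ i ∈ D') ∧ σ.count i = σ'.count i := by
    intro i
    have h := hpt i
    by_cases h1 : i ∈ D <;> by_cases h2 : i ∈ D'
    · exact ⟨⟨fun _ => h2, fun _ => h1⟩, by rw [(hD i h1).2, (hD' i h2).2]⟩
    · exfalso
      rw [if_pos h1, if_neg h2] at h
      have hki := (hD i h1).1
      have : k * σ'.count i ≥ 0 := Nat.zero_le _
      omega
    · exfalso
      rw [if_neg h1, if_pos h2] at h
      have hki := (hD' i h2).1
      have : k * σ.count i ≥ 0 := Nat.zero_le _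
      omega
    · rw [if_neg h1, if_neg h2] at h
      have h3 := Nat.add_left_cancel h
      have : σ.count i = σ'.count i := Nat.eq_of_mul_eq_mul_left (by omega) h3
      exact ⟨⟨fun hc => absurd hc h1, fun hc => absurd hc h2⟩, this⟩
  constructor
  · exact Multiset.ext.mpr fun i => (key i).2
  · exact Finset.ext fun i => (key i).1

lemma countP_fin (k : ℕ) (l : List ℕ) :
    l.countP (fun r => decide (k ≤ r)) =
      (Finset.univ.filter fun i : Fin l.length => k ≤ l.get i).card := by
  rw [Finset.card_filter]
  induction l with
  | nil => simp
  | cons a l ih =>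
    rw [List.countP_cons, ih]
    simp only [List.length_cons]
    rw [Fin.sum_univ_succ]
    simp only [List.get_cons_succ, List.get_cons_zero]
    by_cases h : k ≤ a <;> simp [h, Nat.add_comm]

lemma main (hq : 2 ≤ q) (hk : 1 ≤ k) (s u : ℕ) (ρ : List ℕ) (cs : List (ZMod q))
    (hlen : ρ.length = cs.length + 1) (hcs : ∀ c ∈ cs, c ≠ 0) :
    (cs.length + s).choose s *
      (((Finset.univ.filter fun i : Fin ρ.length => k ≤ ρ.get i).card - s).choose u) ≤
      {y | ∃ z, InsN q k s (bld q ρ cs) z ∧ DelN q k u z y}.ncard := by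
  haveI : NeZero q := ⟨by omega⟩
  classical
  set Sall := Finset.univ.filter fun i : Fin ρ.length => k ≤ ρ.get i with hSall
  set Y := {y | ∃ z, InsN q k s (bld q ρ cs) z ∧ DelN q k u z y} with hY
  have hYfin : Y.Finite := by
    apply Set.Finite.subset
      (List.finite_length_eq (ZMod q) ((bld q ρ cs).length + k * s - k * u))
    rintro y ⟨z, hz, hzy⟩
    have h1 := InsN_length s hz
    have h2 := DelN_length u hzy
    simp only [Set.mem_setOf_eq]
    omega
  set T := (Finset.univ : Finset (Sym (Fin ρ.length) s)).sigma
      (fun σ => (Sall \ (σ.1 : Multiset (Fin ρ.length)).toFinset).powersetCard u) with hT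
  set F : (Σ _ : Sym (Fin ρ.length) s, Finset (Fin ρ.length)) → List (ZMod q) :=
      fun p => bld q (vec k ρ p.1.1 p.2) cs with hF
  have hmemT : ∀ p ∈ T, ∀ i ∈ p.2, k ≤ ρ.get i ∧ Multiset.count i p.1.1 = 0 := by
    rintro ⟨σ, D⟩ hp i hi
    rw [hT, Finset.mem_sigma] at hp
    have := (Finset.mem_powersetCard.mp hp.2).1 hi
    rw [Finset.mem_sdiff, hSall, Finset.mem_filter] at this
    exact ⟨this.1.2, Multiset.count_eq_zero.mpr
      (fun hc => this.2 (Multiset.mem_toFinset.mpr hc))⟩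
  have himg : ∀ p ∈ T, F p ∈ Y := by
    rintro ⟨σ, D⟩ hp
    have hTp := hp
    rw [hT, Finset.mem_sigma] at hTp
    have hDcard : D.card = u := (Finset.mem_powersetCard.mp hTp.2).2
    refine ⟨bld q (vec k ρ σ.1 ∅) cs, ?_, ?_⟩
    · have h := insN_vec (k := k) ρ cs hlen σ.1
      rwa [σ.2] at h
    · have h := delN_vec ρ cs hlen hk σ.1 D (hmemT _ hp)
      rwa [hDcard] at h
  have hinj : Set.InjOn F ↑T := by
    rintro ⟨σ, D⟩ hp ⟨σ', D'⟩ hp' heq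
    rw [Finset.mem_coe] at hp hp'
    have h1 : vec k ρ σ.1 D = vec k ρ σ'.1 D' := by
      have e1 := zeroRuns_bld cs (vec k ρ σ.1 D) (by simpa using hlen) hcs
      have e2 := zeroRuns_bld cs (vec k ρ σ'.1 D') (by simpa using hlen) hcs
      rw [← e1, ← e2]
      exact congrArg (zeroRuns q) heq
    obtain ⟨hσ, hD⟩ := vec_inj hk ρ σ.1 σ'.1 D D' (hmemT _ hp) (hmemT _ hp') h1
    have hσ' : σ = σ' := Subtype.ext hσ
    subst hσ'; subst hD; rfl
  have hcardT : Fintype.card (Sym (Fin ρ.length) s) * (Sall.card - s).choose u ≤ T.card := by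
    rw [hT, Finset.card_sigma]
    calc Fintype.card (Sym (Fin ρ.length) s) * (Sall.card - s).choose u
        = ∑ _σ : Sym (Fin ρ.length) s, (Sall.card - s).choose u := by
          rw [Finset.sum_const, Finset.card_univ, smul_eq_mul]
      _ ≤ ∑ σ : Sym (Fin ρ.length) s,
            ((Sall \ (σ.1 : Multiset (Fin ρ.length)).toFinset).powersetCard u).card := by
          refine Finset.sum_le_sum fun σ _ => ?_
          rw [Finset.card_powersetCard]
          refine Nat.choose_le_choose u ?_
          have h1 : Sall.card - (σ.1 : Multiset (Fin ρ.length)).toFinset.card ≤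
              (Sall \ (σ.1 : Multiset (Fin ρ.length)).toFinset).card :=
            Finset.le_card_sdiff _ _
          have h2 : (σ.1 : Multiset (Fin ρ.length)).toFinset.card ≤ s := by
            have h3 := Multiset.toFinset_card_le σ.1
            rw [σ.2] at h3
            exact h3
          omega
  have hsym : Fintype.card (Sym (Fin ρ.length) s) = (cs.length + s).choose s := by
    rw [Sym.card_sym_eq_choose, Fintype.card_fin]
    congr 1
    omega
  have hsub : ↑(T.image F) ⊆ Y := by
    intro y hy
    rw [Finset.coe_image, Set.mem_image] at hy
    obtain ⟨p, hp, rfl⟩ := hy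
    exact himg p hp
  have hcard2 : (T.image F).card = T.card := Finset.card_image_of_injOn hinj
  have hle : (T.image F).card ≤ Y.ncard := by
    rw [← Set.ncard_coe_finset]
    exact Set.ncard_le_ncard hsub hYfin
  calc (cs.length + s).choose s * (Sall.card - s).choose u
      = Fintype.card (Sym (Fin ρ.length) s) * (Sall.card - s).choose u := by rw [hsym]
    _ ≤ T.card := hcardT
    _ = (T.image F).card := hcard2.symm
    _ ≤ Y.ncard := hle

end Stmt9

/-- if `x ∈ (ℤ_q)^n` has weight `w` and exactly `m` runs of zeros of
length `≥ k`, and `0 ≤ s ≤ t`, `t - s ≤ m - s`, then the number of strings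
obtainable from `x` by `s` insertions followed by `t-s` deletions of blocks `0^k`
is at least `C(w+s,s)·C(m-s,t-s)`, and all such strings have length `n + k(2s-t)`. -/
theorem stmt9 (q k s t n w m : ℕ) (hq : 2 ≤ q) (hk : 1 ≤ k)
    (hst : s ≤ t)
    (x : List (ZMod q)) (hx : x.length = n) (hw : wt q x = w)
    (hm : (zeroRuns q x).countP (fun r => decide (k ≤ r)) = m)
    (hsm : s ≤ m) (htm : t - s ≤ m - s) :
    Nat.choose (w + s) s * Nat.choose (m - s) (t - s) ≤
      {y | ∃ z, InsN q k s x z ∧ DelN q k (t - s) z y}.ncard ∧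
    ∀ y, (∃ z, InsN q k s x z ∧ DelN q k (t - s) z y) →
      y.length + k * (t - s) = n + k * s := by
  constructor
  · set ρ := zeroRuns q x with hρ
    set cs := x.filter (fun a => decide (a ≠ 0)) with hcs2
    have hcs : ∀ c ∈ cs, c ≠ 0 := by
      intro c hc
      rw [hcs2, List.mem_filter] at hc
      simpa using hc.2
    have hw' : cs.length = w := by
      rw [hcs2, ← List.countP_eq_length_filter, ← hw]; rfl
    have hlen : ρ.length = cs.length + 1 := by
      rw [hρ, Stmt9.length_zeroRuns, hw', hw]
    have hbld : Stmt9.bld q ρ cs = x := Stmt9.bld_zeroRuns x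
    have hm' : (Finset.univ.filter fun i : Fin ρ.length => k ≤ ρ.get i).card = m := by
      rw [← Stmt9.countP_fin, ← hm]
    have := Stmt9.main hq hk s (t - s) ρ cs hlen hcs
    rw [hbld, hw', hm'] at this
    exact this
  · rintro y ⟨z, hz, hzy⟩
    have h1 := Stmt9.InsN_length s hz
    have h2 := Stmt9.DelN_length (t - s) hzy
    omega
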